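/- Let C be an abelian category with enough projectives and enough injectives, and suppose that every projective object of C is injective. Given a commutative diagram in C with rows the spans X' ← Y' → Z' and X ← Y → Z and vertical maps X' → X, Y' → Y, Z' → Z, such that the maps Y' → X' and Y → X are monomorphisms and all three vertical maps are stable equivalences, the induced map of pushouts X' ⊔_{Y'} Z' → X ⊔_Y Z is a stable equivalence (i.e., C satisfies Waldhausen's axiom Weq 2 with cofibrations the monomorphisms and weak equivalences the stable equivalences). -/

import Mathlib

open CategoryTheory Limits

universe v u

/-- A morphism factors through a projective object. -/
def FactorsThroughProjective {C : Type u} [Category.{v} C]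
    {X Y : C} (f : X ⟶ Y) : Prop :=
  ∃ (P : C) (_ : Projective P) (g : X ⟶ P) (h : P ⟶ Y), g ≫ h = f

/-- A morphism `f : X ⟶ Y` is a stable equivalence if there is `h : Y ⟶ X`
such that `h ∘ f` is stably equivalent to `id_X` and `f ∘ h` is stably
equivalent to `id_Y`. -/
def IsStableEquiv {C : Type u} [Category.{v} C] [Preadditive C]
    {X Y : C} (f : X ⟶ Y) : Prop :=
  ∃ h : Y ⟶ X, FactorsThroughProjective (f ≫ h - 𝟙 X) ∧
    FactorsThroughProjective (h ≫ f - 𝟙 Y)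

open ZeroObject

section Toolkit
variable {C : Type u} [Category.{v} C]

namespace FactorsThroughProjective

theorem precomp {X Y Z : C} {f : Y ⟶ Z} (hf : FactorsThroughProjective f) (e : X ⟶ Y) :
    FactorsThroughProjective (e ≫ f) := by
  obtain ⟨P, hP, g, h, rfl⟩ := hf
  exact ⟨P, hP, e ≫ g, h, by simp⟩

theorem postcomp {X Y Z : C} {f : X ⟶ Y} (hf : FactorsThroughProjective f) (e : Y ⟶ Z) :
    FactorsThroughProjective (f ≫ e) := by
  obtain ⟨P, hP, g, h, rfl⟩ := hf
  exact ⟨P, hP, g, h ≫ e, by simp⟩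

theorem of_eq {X Y : C} {f g : X ⟶ Y} (hf : FactorsThroughProjective f) (h : f = g) :
    FactorsThroughProjective g := h ▸ hf

section Preadditive
variable [Preadditive C] [HasZeroObject C]

theorem zero {X Y : C} : FactorsThroughProjective (0 : X ⟶ Y) :=
  ⟨0, inferInstance, 0, 0, by simp⟩

theorem neg {X Y : C} {f : X ⟶ Y} (hf : FactorsThroughProjective f) :
    FactorsThroughProjective (-f) := by
  obtain ⟨P, hP, g, h, rfl⟩ := hf
  exact ⟨P, hP, -g, h, by simp⟩

theorem add [HasBinaryBiproducts C] {X Y : C} {f₁ f₂ : X ⟶ Y}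
    (h₁ : FactorsThroughProjective f₁) (h₂ : FactorsThroughProjective f₂) :
    FactorsThroughProjective (f₁ + f₂) := by
  obtain ⟨P, hP, g, h, rfl⟩ := h₁
  obtain ⟨Q, hQ, g', h', rfl⟩ := h₂
  exact ⟨P ⊞ Q, inferInstance, biprod.lift g g', biprod.desc h h', by simp⟩

theorem sub [HasBinaryBiproducts C] {X Y : C} {f₁ f₂ : X ⟶ Y}
    (h₁ : FactorsThroughProjective f₁) (h₂ : FactorsThroughProjective f₂) :
    FactorsThroughProjective (f₁ - f₂) := by
  rw [sub_eq_add_neg]; exact h₁.add h₂.neg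

end Preadditive
end FactorsThroughProjective

namespace IsStableEquiv
variable [Preadditive C] [HasZeroObject C] [HasBinaryBiproducts C]

theorem of_isIso {X Y : C} (f : X ⟶ Y) [IsIso f] : IsStableEquiv f :=
  ⟨inv f, by simp; exact FactorsThroughProjective.zero, by simp; exact FactorsThroughProjective.zero⟩

theorem id (X : C) : IsStableEquiv (𝟙 X) := of_isIso _

theorem comp {X Y Z : C} {f : X ⟶ Y} {g : Y ⟶ Z} (hf : IsStableEquiv f) (hg : IsStableEquiv g) :
    IsStableEquiv (f ≫ g) := by
  obtain ⟨h, h₁, h₂⟩ := hf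
  obtain ⟨k, k₁, k₂⟩ := hg
  refine ⟨k ≫ h, ?_, ?_⟩
  · have : (f ≫ g) ≫ k ≫ h - 𝟙 X = (f ≫ (g ≫ k - 𝟙 Y)) ≫ h + (f ≫ h - 𝟙 X) := by
      simp [Preadditive.comp_sub, Preadditive.sub_comp]
    rw [this]
    exact (((k₁.precomp f).postcomp h)).add h₁
  · have : (k ≫ h) ≫ f ≫ g - 𝟙 Z = (k ≫ (h ≫ f - 𝟙 Y)) ≫ g + (k ≫ g - 𝟙 Z) := by
      simp [Preadditive.comp_sub, Preadditive.sub_comp]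
    rw [this]
    exact (((h₂.precomp k).postcomp g)).add k₂

/-- stable equivalence is invariant under stable equality of maps -/
theorem congr {X Y : C} {f g : X ⟶ Y} (hf : IsStableEquiv f)
    (hfg : FactorsThroughProjective (g - f)) : IsStableEquiv g := by
  obtain ⟨h, h₁, h₂⟩ := hf
  refine ⟨h, ?_, ?_⟩
  · have : g ≫ h - 𝟙 X = (g - f) ≫ h + (f ≫ h - 𝟙 X) := by
      simp [Preadditive.sub_comp]
    rw [this]; exact ((hfg.postcomp h)).add h₁
  · have : h ≫ g - 𝟙 Y = h ≫ (g - f) + (h ≫ f - 𝟙 Y) := by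
      simp [Preadditive.comp_sub]
    rw [this]; exact ((hfg.precomp h)).add h₂

theorem biprod_fst {X : C} (Q : C) [Projective Q] :
    IsStableEquiv (biprod.fst : X ⊞ Q ⟶ X) := by
  refine ⟨biprod.inl, ?_, ?_⟩
  · have : (biprod.fst : X ⊞ Q ⟶ X) ≫ biprod.inl - 𝟙 (X ⊞ Q) = -(biprod.snd ≫ biprod.inr) := by
      rw [← biprod.total]; abel
    rw [this]
    exact (FactorsThroughProjective.postcomp ⟨Q, inferInstance, biprod.snd, 𝟙 Q, by simp⟩ _).neg
  · simpa using FactorsThroughProjective.zero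

theorem biprod_inl {X : C} (Q : C) [Projective Q] :
    IsStableEquiv (biprod.inl : X ⟶ X ⊞ Q) := by
  refine ⟨biprod.fst, ?_, ?_⟩
  · simpa using FactorsThroughProjective.zero
  · have : (biprod.fst : X ⊞ Q ⟶ X) ≫ biprod.inl - 𝟙 (X ⊞ Q) = -(biprod.snd ≫ biprod.inr) := by
      rw [← biprod.total]; abel
    rw [this]
    exact (FactorsThroughProjective.postcomp ⟨Q, inferInstance, biprod.snd, 𝟙 Q, by simp⟩ _).neg

theorem biprod_map {X Y X' Y' : C} {a : X ⟶ X'} {c : Y ⟶ Y'}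
    (ha : IsStableEquiv a) (hc : IsStableEquiv c) :
    IsStableEquiv (biprod.map a c) := by
  obtain ⟨h, h₁, h₂⟩ := ha
  obtain ⟨k, k₁, k₂⟩ := hc
  refine ⟨biprod.map h k, ?_, ?_⟩
  · have : biprod.map a c ≫ biprod.map h k - 𝟙 (X ⊞ Y) =
        (biprod.fst ≫ (a ≫ h - 𝟙 X)) ≫ biprod.inl + (biprod.snd ≫ (c ≫ k - 𝟙 Y)) ≫ biprod.inr := by
      ext <;> simp
    rw [this]
    exact (((h₁.precomp _).postcomp _)).add (((k₁.precomp _).postcomp _))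
  · have : biprod.map h k ≫ biprod.map a c - 𝟙 (X' ⊞ Y') =
        (biprod.fst ≫ (h ≫ a - 𝟙 X')) ≫ biprod.inl + (biprod.snd ≫ (k ≫ c - 𝟙 Y')) ≫ biprod.inr := by
      ext <;> simp
    rw [this]
    exact (((h₂.precomp _).postcomp _)).add (((k₂.precomp _).postcomp _))

end IsStableEquiv
end Toolkit

section Splitting
variable {C : Type u} [Category.{v} C] [Abelian C]

theorem projective_of_retract {X P : C} (i : X ⟶ P) (r : P ⟶ X) (hir : i ≫ r = 𝟙 X)
    [Projective P] : Projective X := by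
  constructor
  intro E T f e he
  refine ⟨i ≫ Projective.factorThru (r ≫ f) e, ?_⟩
  rw [Category.assoc, Projective.factorThru_comp, ← Category.assoc, hir, Category.id_comp]

theorem split_of_epi_stEq {M N : C} (f : M ⟶ N) [Epi f] (hf : IsStableEquiv f) :
    ∃ σ : N ⟶ M, σ ≫ f = 𝟙 N ∧ Projective (kernel f) := by
  obtain ⟨s, h₁, h₂⟩ := hf
  obtain ⟨W, hW, α, β, hαβ⟩ := h₂
  have : Projective W := hW
  set σ := s - α ≫ Projective.factorThru β f with hσd
  have hσf : σ ≫ f = 𝟙 N := by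
    rw [hσd, Preadditive.sub_comp, Category.assoc, Projective.factorThru_comp, hαβ]; simp
  refine ⟨σ, hσf, ?_⟩
  -- kernel of f is projective
  set ι := kernel.ι f with hι
  have he : (𝟙 M - f ≫ σ) ≫ f = 0 := by
    rw [Preadditive.sub_comp, Category.assoc, hσf]; simp
  set κ := kernel.lift f (𝟙 M - f ≫ σ) he with hκ
  have hκι : κ ≫ ι = 𝟙 M - f ≫ σ := kernel.lift_ι _ _ _
  have hretr : ι ≫ κ = 𝟙 (kernel f) := by
    rw [← cancel_mono ι, Category.assoc, hκι, Preadditive.comp_sub]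
    simp [hι, kernel.condition_assoc]
  -- f ≫ σ - 𝟙 M factors through a projective
  have hFTP : FactorsThroughProjective (f ≫ σ - 𝟙 M) := by
    have : f ≫ σ - 𝟙 M = (f ≫ s - 𝟙 M) - (f ≫ α) ≫ Projective.factorThru β f := by
      rw [hσd]; simp only [Preadditive.comp_sub, Category.assoc]; abel
    rw [this]
    exact h₁.sub ⟨W, hW, f ≫ α, Projective.factorThru β f, rfl⟩
  obtain ⟨W', hW', u, v, huv⟩ := hFTP
  have : Projective W' := hW'
  have hι0 : ι = (-(ι ≫ u)) ≫ v := by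
    have : ι ≫ (f ≫ σ - 𝟙 M) = -ι := by
      rw [Preadditive.comp_sub]
      simp [hι, kernel.condition_assoc]
    rw [Preadditive.neg_comp, Category.assoc, huv, this, neg_neg]
  exact projective_of_retract ((-(ι ≫ u))) (v ≫ κ) (by
    rw [← Category.assoc, ← hι0, hretr])

theorem stEq_of_epi_kernel_proj_inj {M N : C} (f : M ⟶ N) [Epi f]
    (hk : Projective (kernel f)) (hki : Injective (kernel f)) : IsStableEquiv f := by
  set ι := kernel.ι f with hι
  set ρ := Injective.factorThru (𝟙 (kernel f)) ι with hρ
  have hιρ : ι ≫ ρ = 𝟙 (kernel f) := Injective.comp_factorThru _ _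
  have he : kernel.ι f ≫ (𝟙 M - ρ ≫ ι) = 0 := by
    rw [Preadditive.comp_sub, ← Category.assoc, ← hι, hιρ]; simp
  set σ := Abelian.epiDesc f (𝟙 M - ρ ≫ ι) he with hσ
  have hfσ : f ≫ σ = 𝟙 M - ρ ≫ ι := Abelian.comp_epiDesc _ _ _
  refine ⟨σ, ?_, ?_⟩
  · have : f ≫ σ - 𝟙 M = (-ρ) ≫ ι := by rw [hfσ]; simp
    rw [this]
    exact ⟨kernel f, hk, -ρ, ι, rfl⟩
  · have : σ ≫ f = 𝟙 N := by
      rw [← cancel_epi f, ← Category.assoc, hfσ]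
      simp [Preadditive.sub_comp, Category.assoc, hι, kernel.condition]
    rw [this]
    simpa using FactorsThroughProjective.zero

end Splitting

section FinalCase
variable {C : Type u} [Category.{v} C] [Abelian C]

open CategoryTheory.Abelian
open scoped Pseudoelement
open CategoryTheory.Abelian.Pseudoelement

/-- Final case: both `b` and `t` are epis with projective kernels; then the induced map `p`
on cokernels is a stable equivalence, provided projectives are injective. -/
theorem ses_final (hPI : ∀ P : C, Projective P → Injective P)
    {Y₁ B₁ P₁ Y₂ B₂ P₂ : C}
    (m₁ : Y₁ ⟶ B₁) (q₁ : B₁ ⟶ P₁) (m₂ : Y₂ ⟶ B₂) (q₂ : B₂ ⟶ P₂)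
    [Mono m₁] [Mono m₂] [Epi q₁] [Epi q₂]
    (w₁ : m₁ ≫ q₁ = 0) (w₂ : m₂ ≫ q₂ = 0)
    (ex₁ : (ShortComplex.mk m₁ q₁ w₁).Exact) (ex₂ : (ShortComplex.mk m₂ q₂ w₂).Exact)
    (b : Y₁ ⟶ Y₂) (t : B₁ ⟶ B₂) (p : P₁ ⟶ P₂)
    (sq1 : m₁ ≫ t = b ≫ m₂) (sq2 : t ≫ q₂ = q₁ ≫ p)
    [Epi b] [Epi t] (hkb : Projective (kernel b)) (hkt : Projective (kernel t)) :
    IsStableEquiv p := by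
  have hpe : Epi p := by
    have h1 : Epi (q₁ ≫ p) := by rw [← sq2]; exact epi_comp t q₂
    exact epi_of_epi q₁ p
  have hμw : (kernel.ι b ≫ m₁) ≫ t = 0 := by
    rw [Category.assoc, sq1, ← Category.assoc, kernel.condition, zero_comp]
  set μ : kernel b ⟶ kernel t := kernel.lift t (kernel.ι b ≫ m₁) hμw with hμ
  have hμιK : μ ≫ kernel.ι t = kernel.ι b ≫ m₁ := kernel.lift_ι _ _ _
  have hμmono : Mono μ := by
    have : Mono (μ ≫ kernel.ι t) := by rw [hμιK]; exact mono_comp _ _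
    exact mono_of_mono μ (kernel.ι t)
  have hνw : (kernel.ι t ≫ q₁) ≫ p = 0 := by
    rw [Category.assoc, ← sq2, ← Category.assoc, kernel.condition, zero_comp]
  set ν : kernel t ⟶ kernel p := kernel.lift p (kernel.ι t ≫ q₁) hνw with hν
  have hνιN : ν ≫ kernel.ι p = kernel.ι t ≫ q₁ := kernel.lift_ι _ _ _
  have hμν : μ ≫ ν = 0 := by
    rw [← cancel_mono (kernel.ι p), Category.assoc, hνιN, ← Category.assoc, hμιK,
      Category.assoc, w₁, comp_zero, zero_comp]
  -- kernel-exactness short complexes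
  have exKb : (ShortComplex.mk (kernel.ι b) b (kernel.condition b)).Exact :=
    ShortComplex.exact_of_f_is_kernel _ (kernelIsKernel b)
  have exKt : (ShortComplex.mk (kernel.ι t) t (kernel.condition t)).Exact :=
    ShortComplex.exact_of_f_is_kernel _ (kernelIsKernel t)
  -- ν is an epimorphism (pseudoelement chase)
  have hνepi : Epi ν := by
    apply epi_of_pseudo_surjective
    intro x
    obtain ⟨y, hy⟩ := pseudo_surjective_of_epi q₁ (pseudoApply (kernel.ι p) x)
    have h0 : pseudoApply q₂ (pseudoApply t y) = 0 := by
      rw [← Pseudoelement.comp_apply, sq2, Pseudoelement.comp_apply, hy,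
        ← Pseudoelement.comp_apply, kernel.condition, Pseudoelement.zero_apply]
    obtain ⟨z, hz⟩ := pseudo_exact_of_exact ex₂ (pseudoApply t y) h0
    dsimp only [ShortComplex.mk] at z hz
    obtain ⟨z', hz'⟩ := pseudo_surjective_of_epi b z
    have heq : pseudoApply t y = pseudoApply t (pseudoApply m₁ z') := by
      rw [← Pseudoelement.comp_apply, sq1, Pseudoelement.comp_apply, hz', hz]
    obtain ⟨w, hw0, hwg⟩ := sub_of_eq_image t y (pseudoApply m₁ z') heq
    have hq₁w : pseudoApply q₁ w = pseudoApply q₁ y :=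
      hwg _ q₁ (by rw [← Pseudoelement.comp_apply, w₁, Pseudoelement.zero_apply])
    obtain ⟨k, hk⟩ := pseudo_exact_of_exact exKt w hw0
    dsimp only [ShortComplex.mk] at k hk
    refine ⟨k, pseudo_injective_of_mono (kernel.ι p) ?_⟩
    rw [← Pseudoelement.comp_apply, hνιN, Pseudoelement.comp_apply, hk, hq₁w, hy]
  -- exactness at kernel t (pseudoelement chase)
  have exμν : (ShortComplex.mk μ ν hμν).Exact := by
    apply exact_of_pseudo_exact
    intro k hk
    dsimp only [ShortComplex.mk] at k hk ⊢
    have h0 : pseudoApply q₁ (pseudoApply (kernel.ι t) k) = 0 := by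
      rw [← Pseudoelement.comp_apply, ← hνιN, Pseudoelement.comp_apply, hk,
        Pseudoelement.apply_zero]
    obtain ⟨z', hz'⟩ := pseudo_exact_of_exact ex₁ (pseudoApply (kernel.ι t) k) h0
    dsimp only [ShortComplex.mk] at z' hz'
    have hbz : pseudoApply m₂ (pseudoApply b z') = 0 := by
      rw [← Pseudoelement.comp_apply, ← sq1, Pseudoelement.comp_apply, hz',
        ← Pseudoelement.comp_apply, kernel.condition, Pseudoelement.zero_apply]
    have hbz0 : pseudoApply b z' = 0 := zero_of_map_zero m₂ (pseudo_injective_of_mono m₂) _ hbz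
    obtain ⟨r, hr⟩ := pseudo_exact_of_exact exKb z' hbz0
    dsimp only [ShortComplex.mk] at r hr
    refine ⟨r, pseudo_injective_of_mono (kernel.ι t) ?_⟩
    rw [← Pseudoelement.comp_apply, hμιK, Pseudoelement.comp_apply, hr, hz']
  -- ν is a cokernel of μ
  have hcoker := exμν.gIsCokernel
  -- split μ using injectivity of the projective kernel of b
  have hRInj : Injective (kernel b) := hPI _ hkb
  have : Mono μ := hμmono
  set π : kernel t ⟶ kernel b := Injective.factorThru (𝟙 (kernel b)) μ with hπ
  have hμπ : μ ≫ π = 𝟙 (kernel b) := Injective.comp_factorThru _ _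
  have he0 : μ ≫ (𝟙 (kernel t) - π ≫ μ) = 0 := by
    rw [Preadditive.comp_sub, ← Category.assoc, hμπ]; simp
  obtain ⟨ψ, hψ⟩ := CokernelCofork.IsColimit.desc' hcoker (𝟙 (kernel t) - π ≫ μ) he0
  have hψ' : ν ≫ ψ = 𝟙 (kernel t) - π ≫ μ := hψ
  have hψν : ψ ≫ ν = 𝟙 (kernel p) := by
    rw [← cancel_epi ν, ← Category.assoc, hψ', Preadditive.sub_comp, Category.assoc, hμν,
      comp_zero]
    simp
  have hNproj : Projective (kernel p) := projective_of_retract ψ ν hψν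
  exact stEq_of_epi_kernel_proj_inj p hNproj (hPI _ hNproj)

end FinalCase

section Reductions
variable {C : Type u} [Category.{v} C] [Abelian C]

/-- Row modification for reduction A : `(Y ⊞ R, B ⊞ R, P)`. -/
noncomputable def cokerRowA {Y B P : C} (m : Y ⟶ B) (q : B ⟶ P) (w : m ≫ q = 0)
    (hc : IsColimit (CokernelCofork.ofπ q w)) (R : C) :
    IsColimit (CokernelCofork.ofπ (biprod.desc q (0 : R ⟶ P))
      (show biprod.map m (𝟙 R) ≫ biprod.desc q 0 = 0 by ext <;> simp [w])) := by
  refine CokernelCofork.IsColimit.ofπ _ _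
    (fun {W} k hk => (CokernelCofork.IsColimit.desc' hc (biprod.inl ≫ k) ?_).1) ?_ ?_
  · have := biprod.inl ≫= hk
    simpa using this
  · intro W k hk
    have fac := (CokernelCofork.IsColimit.desc' hc (biprod.inl ≫ k) (by
      have := biprod.inl ≫= hk; simpa using this)).2
    ext
    · simpa using fac
    · have := biprod.inr ≫= hk
      simpa using this.symm
  · intro W k hk d hd
    apply Cofork.IsColimit.hom_ext hc
    have fac : q ≫ (CokernelCofork.IsColimit.desc' hc (biprod.inl ≫ k) (by
      have := biprod.inl ≫= hk; simpa using this)).1 = biprod.inl ≫ k :=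
      (CokernelCofork.IsColimit.desc' hc (biprod.inl ≫ k) _).2
    show q ≫ d = q ≫ _
    rw [fac]
    have := biprod.inl ≫= hd
    simpa using this

/-- Row modification for reduction B : `(Y, B ⊞ Q, P ⊞ Q)`. -/
noncomputable def cokerRowB {Y B P : C} (m : Y ⟶ B) (q : B ⟶ P) (w : m ≫ q = 0)
    (hc : IsColimit (CokernelCofork.ofπ q w)) (Q : C) :
    IsColimit (CokernelCofork.ofπ (biprod.map q (𝟙 Q))
      (show (m ≫ biprod.inl) ≫ biprod.map q (𝟙 Q) = 0 by
        rw [Category.assoc, biprod.inl_map, ← Category.assoc, w, zero_comp])) := by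
  refine CokernelCofork.IsColimit.ofπ _ _
    (fun {W} k hk => biprod.desc
      (CokernelCofork.IsColimit.desc' hc (biprod.inl ≫ k) (by
        rw [← Category.assoc]; exact hk)).1 (biprod.inr ≫ k)) ?_ ?_
  · intro W k hk
    have fac := (CokernelCofork.IsColimit.desc' hc (biprod.inl ≫ k) (by
      rw [← Category.assoc]; exact hk)).2
    ext
    · simpa using fac
    · simp
  · intro W k hk d hd
    ext
    · apply Cofork.IsColimit.hom_ext hc
      have fac : q ≫ (CokernelCofork.IsColimit.desc' hc (biprod.inl ≫ k) (by
        rw [← Category.assoc]; exact hk)).1 = biprod.inl ≫ k :=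
        (CokernelCofork.IsColimit.desc' hc (biprod.inl ≫ k) _).2
      simp only [biprod.inl_desc]
      show q ≫ biprod.inl ≫ d = q ≫ _
      rw [fac]
      have h1 : biprod.inl ≫ biprod.map q (𝟙 Q) ≫ d = biprod.inl ≫ k := by rw [hd]
      simp only [biprod.inl_map_assoc] at h1
      simpa using h1
    · simp only [biprod.inr_desc]
      have h2 : biprod.inr ≫ biprod.map q (𝟙 Q) ≫ d = biprod.inr ≫ k := by rw [hd]
      simp only [biprod.inr_map_assoc, Category.id_comp] at h2
      simpa using h2
end Reductions

section MainSES
variable {C : Type u} [Category.{v} C] [Abelian C]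

theorem mono_biprod_map_id {Y B R : C} (m : Y ⟶ B) [Mono m] :
    Mono (biprod.map m (𝟙 R)) := by
  constructor
  intro T u v h
  apply biprod.hom_ext
  · have h1 := h =≫ biprod.fst
    simp only [Category.assoc, biprod.map_fst] at h1
    rw [← Category.assoc, ← Category.assoc] at h1
    exact (cancel_mono m).1 h1
  · have h2 := h =≫ biprod.snd
    simpa using h2

theorem epi_biprod_map_id {B P Q : C} (q : B ⟶ P) [Epi q] :
    Epi (biprod.map q (𝟙 Q)) := by
  constructor
  intro T u v h
  apply biprod.hom_ext'
  · have h1 := biprod.inl ≫= h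
    simp only [biprod.inl_map_assoc] at h1
    rw [cancel_epi q] at h1
    exact h1
  · have h2 := biprod.inr ≫= h
    simpa using h2

theorem ses_lemma [EnoughProjectives C] (hPI : ∀ P : C, Projective P → Injective P)
    {Y₁ B₁ P₁ Y₂ B₂ P₂ : C}
    (m₁ : Y₁ ⟶ B₁) (q₁ : B₁ ⟶ P₁) (m₂ : Y₂ ⟶ B₂) (q₂ : B₂ ⟶ P₂)
    [Mono m₁] [Mono m₂] [Epi q₁] [Epi q₂]
    (w₁ : m₁ ≫ q₁ = 0) (w₂ : m₂ ≫ q₂ = 0)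
    (ex₁ : (ShortComplex.mk m₁ q₁ w₁).Exact) (ex₂ : (ShortComplex.mk m₂ q₂ w₂).Exact)
    (b : Y₁ ⟶ Y₂) (t : B₁ ⟶ B₂) (p : P₁ ⟶ P₂)
    (sq1 : m₁ ≫ t = b ≫ m₂) (sq2 : t ≫ q₂ = q₁ ≫ p)
    (hb : IsStableEquiv b) (ht : IsStableEquiv t) : IsStableEquiv p := by
  have hc₁ : IsColimit (CokernelCofork.ofπ q₁ w₁) := ex₁.gIsCokernel
  -- Reduction A: make the first vertical map an epi with projective kernel
  set R := Projective.over Y₂ with hR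
  set eR : R ⟶ Y₂ := Projective.π Y₂ with heR
  set bA : Y₁ ⊞ R ⟶ Y₂ := biprod.desc b eR with hbAd
  haveI hbAepi : Epi bA := by
    have : biprod.inr ≫ bA = eR := biprod.inr_desc _ _
    exact epi_of_epi_fac this
  have hbA : IsStableEquiv bA := by
    apply ((IsStableEquiv.biprod_fst R).comp hb).congr
    have : bA - biprod.fst ≫ b = biprod.snd ≫ eR := by
      rw [hbAd]; ext <;> simp
    rw [this]; exact ⟨R, inferInstance, biprod.snd, eR, rfl⟩
  set tA : B₁ ⊞ R ⟶ B₂ := biprod.desc t (eR ≫ m₂) with htAd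
  have htA : IsStableEquiv tA := by
    apply ((IsStableEquiv.biprod_fst R).comp ht).congr
    have : tA - biprod.fst ≫ t = biprod.snd ≫ (eR ≫ m₂) := by
      rw [htAd]; ext <;> simp
    rw [this]; exact ⟨R, inferInstance, biprod.snd, eR ≫ m₂, rfl⟩
  set mA : Y₁ ⊞ R ⟶ B₁ ⊞ R := biprod.map m₁ (𝟙 R) with hmA
  set qA : B₁ ⊞ R ⟶ P₁ := biprod.desc q₁ 0 with hqA
  have wA : mA ≫ qA = 0 := by rw [hmA, hqA]; ext <;> simp [w₁]
  have hcA : IsColimit (CokernelCofork.ofπ qA wA) := cokerRowA m₁ q₁ w₁ hc₁ R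
  have sqA1 : mA ≫ tA = bA ≫ m₂ := by
    rw [hmA, htAd, hbAd]; ext
    · simpa using sq1
    · simp
  have sqA2 : tA ≫ q₂ = qA ≫ p := by
    rw [htAd, hqA]; ext
    · simpa using sq2
    · simp only [biprod.inr_desc_assoc, Category.assoc, w₂, comp_zero, zero_comp]
  -- Reduction B: make the second vertical map an epi with projective kernel
  set Q := Projective.over B₂ with hQ
  set eQ : Q ⟶ B₂ := Projective.π B₂ with heQ
  set tB : (B₁ ⊞ R) ⊞ Q ⟶ B₂ := biprod.desc tA eQ with htBd
  haveI htBepi : Epi tB := by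
    have : biprod.inr ≫ tB = eQ := biprod.inr_desc _ _
    exact epi_of_epi_fac this
  have htB : IsStableEquiv tB := by
    apply ((IsStableEquiv.biprod_fst Q).comp htA).congr
    have : tB - biprod.fst ≫ tA = biprod.snd ≫ eQ := by
      rw [htBd]; ext <;> simp
    rw [this]; exact ⟨Q, inferInstance, biprod.snd, eQ, rfl⟩
  set mB : Y₁ ⊞ R ⟶ (B₁ ⊞ R) ⊞ Q := mA ≫ biprod.inl with hmB
  set qB : (B₁ ⊞ R) ⊞ Q ⟶ P₁ ⊞ Q := biprod.map qA (𝟙 Q) with hqB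
  have wB : mB ≫ qB = 0 := by
    rw [hmB, hqB, Category.assoc, biprod.inl_map, ← Category.assoc, wA, zero_comp]
  have hcB : IsColimit (CokernelCofork.ofπ qB wB) := cokerRowB mA qA wA hcA Q
  set pB : P₁ ⊞ Q ⟶ P₂ := biprod.desc p (eQ ≫ q₂) with hpBd
  have sqB1 : mB ≫ tB = bA ≫ m₂ := by
    rw [hmB, htBd, Category.assoc, biprod.inl_desc, sqA1]
  have sqB2 : tB ≫ q₂ = qB ≫ pB := by
    rw [htBd, hqB, hpBd]
    apply biprod.hom_ext' <;> simp [sqA2]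
  -- instances for the final case
  haveI : Mono mA := mono_biprod_map_id m₁
  haveI : Mono mB := by rw [hmB]; exact mono_comp _ _
  haveI : Epi qB := epi_biprod_map_id qA
  have exB : (ShortComplex.mk mB qB wB).Exact := ShortComplex.exact_of_g_is_cokernel _ hcB
  obtain ⟨σ₁, hσ₁, hkbA⟩ := split_of_epi_stEq bA hbA
  obtain ⟨σ₂, hσ₂, hktB⟩ := split_of_epi_stEq tB htB
  have hpB : IsStableEquiv pB :=
    ses_final hPI mB qB m₂ q₂ wB w₂ exB ex₂ bA tB pB sqB1 sqB2 hkbA hktB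
  have hfac : biprod.inl ≫ pB = p := by rw [hpBd]; simp
  rw [← hfac]
  exact (IsStableEquiv.biprod_inl Q).comp hpB

end MainSES

section PushoutRow
variable {C : Type u} [Category.{v} C] [Abelian C]

theorem pushout_row_w {Y X Z : C} (f : Y ⟶ X) (g : Y ⟶ Z) :
    biprod.lift f (-g) ≫ biprod.desc (pushout.inl f g) (pushout.inr f g) = 0 := by
  rw [biprod.lift_desc, pushout.condition]
  simp

noncomputable def pushoutRowCoker {Y X Z : C} (f : Y ⟶ X) (g : Y ⟶ Z) :
    IsColimit (CokernelCofork.ofπ (biprod.desc (pushout.inl f g) (pushout.inr f g))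
      (pushout_row_w f g)) := by
  have key : ∀ {W : C} (k : X ⊞ Z ⟶ W), biprod.lift f (-g) ≫ k = 0 →
      f ≫ biprod.inl ≫ k = g ≫ biprod.inr ≫ k := by
    intro W k hk
    have : biprod.lift f (-g) = f ≫ biprod.inl + (-g) ≫ biprod.inr := by ext <;> simp
    rw [this, Preadditive.add_comp, Category.assoc, Category.assoc, Preadditive.neg_comp] at hk
    rw [← sub_eq_zero]
    simpa [sub_eq_add_neg] using hk
  refine CokernelCofork.IsColimit.ofπ _ _
    (fun {W} k hk => pushout.desc (biprod.inl ≫ k) (biprod.inr ≫ k) (key k hk)) ?_ ?_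
  · intro W k hk
    apply biprod.hom_ext' <;> simp [pushout.inl_desc, pushout.inr_desc]
  · intro W k hk d hd
    apply pushout.hom_ext
    · have := biprod.inl ≫= hd
      simpa [pushout.inl_desc] using this
    · have := biprod.inr ≫= hd
      simpa [pushout.inr_desc] using this

theorem pushout_row_mono {Y X Z : C} (f : Y ⟶ X) (g : Y ⟶ Z) [Mono f] :
    Mono (biprod.lift f (-g)) := by
  constructor
  intro T u v h
  have h1 := h =≫ biprod.fst
  simp only [Category.assoc, biprod.lift_fst] at h1
  exact (cancel_mono f).1 h1

theorem pushout_row_epi {Y X Z : C} (f : Y ⟶ X) (g : Y ⟶ Z) :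
    Epi (biprod.desc (pushout.inl f g) (pushout.inr f g)) := by
  constructor
  intro T u v h
  apply pushout.hom_ext
  · have := biprod.inl ≫= h
    simpa using this
  · have := biprod.inr ≫= h
    simpa using this

end PushoutRow

/-- Waldhausen's axiom Weq 2.  Let `C` be an abelian
category with enough projectives and enough injectives in which every
projective object is injective.  Given a commutative diagram whose rows are
the spans `X' ←f'− Y' −g'→ Z'` and `X ←f− Y −g→ Z` such that `f' : Y' ⟶ X'`
and `f : Y ⟶ X` are monomorphisms, and whose vertical maps `a : X' ⟶ X`,
`b : Y' ⟶ Y`, `c : Z' ⟶ Z` are stable equivalences, the induced map of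
pushouts `X' ⊔_{Y'} Z' ⟶ X ⊔_Y Z` is a stable equivalence. -/
theorem waldhausen_weq2
    {C : Type u} [Category.{v} C] [Abelian C] [EnoughProjectives C]
    [EnoughInjectives C]
    (hPI : ∀ P : C, Projective P → Injective P)
    {X' Y' Z' X Y Z : C}
    (f' : Y' ⟶ X') (g' : Y' ⟶ Z') (f : Y ⟶ X) (g : Y ⟶ Z)
    [Mono f'] [Mono f]
    (a : X' ⟶ X) (b : Y' ⟶ Y) (c : Z' ⟶ Z)
    (e₁ : f' ≫ a = b ≫ f) (e₂ : g' ≫ c = b ≫ g)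
    (ha : IsStableEquiv a) (hb : IsStableEquiv b) (hc : IsStableEquiv c) :
    IsStableEquiv (pushout.map f' g' f g a c b e₁ e₂) := by
  haveI := pushout_row_mono f' g'
  haveI := pushout_row_mono f g
  haveI := pushout_row_epi f' g'
  haveI := pushout_row_epi f g
  have ex₁ : (ShortComplex.mk _ _ (pushout_row_w f' g')).Exact :=
    ShortComplex.exact_of_g_is_cokernel _ (pushoutRowCoker f' g')
  have ex₂ : (ShortComplex.mk _ _ (pushout_row_w f g)).Exact :=
    ShortComplex.exact_of_g_is_cokernel _ (pushoutRowCoker f g)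
  have sq1 : biprod.lift f' (-g') ≫ biprod.map a c = b ≫ biprod.lift f (-g) := by
    apply biprod.hom_ext <;> simp [e₁, e₂]
  have sq2 : biprod.map a c ≫ biprod.desc (pushout.inl f g) (pushout.inr f g) =
      biprod.desc (pushout.inl f' g') (pushout.inr f' g') ≫
        pushout.map f' g' f g a c b e₁ e₂ := by
    apply biprod.hom_ext' <;> simp [pushout.inl_desc, pushout.inr_desc]
  exact ses_lemma hPI (biprod.lift f' (-g'))
    (biprod.desc (pushout.inl f' g') (pushout.inr f' g'))
    (biprod.lift f (-g)) (biprod.desc (pushout.inl f g) (pushout.inr f g))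
    (pushout_row_w f' g') (pushout_row_w f g) ex₁ ex₂
    b (biprod.map a c) (pushout.map f' g' f g a c b e₁ e₂)
    sq1 sq2 hb (IsStableEquiv.biprod_map ha hc)
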